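/- arXiv:1405.5638 — 5 statements merged into one kernel-verified Lean document; each statement's English description precedes it below -/
import Mathlib

section
/- Let F_Q ⊂ F_{Q^2} be finite fields, G = GL_2(F_Q), B the upper triangular Borel subgroup, and χ_1, χ_2 characters of F_Q^×. Embed F_{Q^2}^× into G. Then the inner product ⟨χ_{Ind_B^G(χ_1 ⊗ χ_2)}, 1⟩ over the subgroup F_{Q^2}^× equals 1 if the product character χ_1·χ_2 is trivial on F_Q^×, and equals 0 otherwise. -/
open Classical

open Matrix in
private lemma card_borel_aux (K : Type*) [Field K] [Fintype K] [DecidableEq K] :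
    (Finset.univ.filter fun m : GL (Fin 2) K =>
        (↑m : Matrix (Fin 2) (Fin 2) K) 1 0 = 0).card =
      (Fintype.card K - 1) * (Fintype.card K * (Fintype.card K - 1)) := by
  classical
  have hdetne : ∀ m : GL (Fin 2) K, ((↑m : Matrix (Fin 2) (Fin 2) K)).det ≠ 0 := fun m =>
    ((Matrix.isUnit_iff_isUnit_det _).mp m.isUnit).ne_zero
  set T : Finset (K × K × K) :=
    (Finset.univ.filter fun a : K => a ≠ 0) ×ˢ
      (Finset.univ ×ˢ (Finset.univ.filter fun a : K => a ≠ 0)) with hT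
  have hcardne : (Finset.univ.filter fun a : K => a ≠ 0).card = Fintype.card K - 1 := by
    rw [Finset.filter_ne', Finset.card_erase_of_mem (Finset.mem_univ 0), Finset.card_univ]
  have hcardT : T.card = (Fintype.card K - 1) * (Fintype.card K * (Fintype.card K - 1)) := by
    rw [hT, Finset.card_product, Finset.card_product, hcardne, Finset.card_univ]
  rw [← hcardT]
  refine Finset.card_bij' (fun m _ => (((m : Matrix (Fin 2) (Fin 2) K) 0 0,
      (m : Matrix (Fin 2) (Fin 2) K) 0 1, (m : Matrix (Fin 2) (Fin 2) K) 1 1) : K × K × K))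
    (fun p hp => Matrix.GeneralLinearGroup.mkOfDetNeZero !![p.1, p.2.1; 0, p.2.2] (by
      rw [hT] at hp
      simp only [Finset.mem_product, Finset.mem_filter, Finset.mem_univ, true_and] at hp
      rw [Matrix.det_fin_two_of]
      simpa using mul_ne_zero hp.1 hp.2))
    ?_ ?_ ?_ ?_
  · intro m hm
    simp only [Finset.mem_filter, Finset.mem_univ, true_and] at hm
    have hd := hdetne m
    rw [Matrix.det_fin_two, hm, mul_zero, sub_zero] at hd
    rw [hT]
    simp only [Finset.mem_product, Finset.mem_filter, Finset.mem_univ, true_and]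
    exact ⟨left_ne_zero_of_mul hd, right_ne_zero_of_mul hd⟩
  · intro p hp
    simp only [Finset.mem_filter, Finset.mem_univ, true_and]
    rfl
  · intro m hm
    simp only [Finset.mem_filter, Finset.mem_univ, true_and] at hm
    apply Matrix.GeneralLinearGroup.ext
    intro i j
    show (!![(m : Matrix (Fin 2) (Fin 2) K) 0 0, (m : Matrix (Fin 2) (Fin 2) K) 0 1; 0,
      (m : Matrix (Fin 2) (Fin 2) K) 1 1]) i j = (m : Matrix (Fin 2) (Fin 2) K) i j
    fin_cases i <;> fin_cases j <;> simp [hm]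
  · intro p hp
    rfl

/-- The inner product over `F_{Q^2}^×` of the character of the parabolically
induced representation `Ind_B^G(χ₁ ⊗ χ₂)` of `G = GL₂(F_Q)` with the trivial
character equals `1` if `χ₁·χ₂` is trivial on `F_Q^×`, and `0` otherwise.
`F_{Q^2}^×` embeds in `G` via multiplication on `L = F_{Q^2}` in a basis `b`;
the induced character at `g` is `(1/|B|) ∑_{x : x⁻¹gx ∈ B} χ₁((x⁻¹gx)₀₀)·χ₂((x⁻¹gx)₁₁)`. -/
theorem stmt_5 (K L : Type*) [Field K] [Field L] [Algebra K L]
    [Fintype K] [Fintype L] [DecidableEq K] [DecidableEq L]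
    (hdim : Module.finrank K L = 2)
    (χ₁ χ₂ : MulChar K ℂ)
    (b : Module.Basis (Fin 2) K L)
    (e : Lˣ →* Matrix.GeneralLinearGroup (Fin 2) K)
    (he : ∀ x : Lˣ, (↑(e x) : Matrix (Fin 2) (Fin 2) K) =
      LinearMap.toMatrix b b (LinearMap.mulLeft K (x : L))) :
    (1 / (Nat.card Lˣ : ℂ)) * ∑ x : Lˣ,
      ((1 : ℂ) / ((Finset.univ.filter fun m : Matrix.GeneralLinearGroup (Fin 2) K =>
          (↑m : Matrix (Fin 2) (Fin 2) K) 1 0 = 0).card : ℂ)) *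
        ∑ y : Matrix.GeneralLinearGroup (Fin 2) K,
          (if (↑(y⁻¹ * e x * y) : Matrix (Fin 2) (Fin 2) K) 1 0 = 0 then
            χ₁ ((↑(y⁻¹ * e x * y) : Matrix (Fin 2) (Fin 2) K) 0 0) *
              χ₂ ((↑(y⁻¹ * e x * y) : Matrix (Fin 2) (Fin 2) K) 1 1)
          else 0) =
    if ∀ u : K, u ≠ 0 → χ₁ u * χ₂ u = 1 then 1 else 0 := by
  classical
  have hq2 : 1 < Fintype.card K := Fintype.one_lt_card
  set q : ℕ := Fintype.card K with hqdef
  set NB : ℕ := (Finset.univ.filter fun m : Matrix.GeneralLinearGroup (Fin 2) K =>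
      (↑m : Matrix (Fin 2) (Fin 2) K) 1 0 = 0).card with hNBdef
  set F : Lˣ → ℂ := fun x =>
    ((1 : ℂ) / (NB : ℂ)) *
      ∑ y : Matrix.GeneralLinearGroup (Fin 2) K,
        (if (↑(y⁻¹ * e x * y) : Matrix (Fin 2) (Fin 2) K) 1 0 = 0 then
          χ₁ ((↑(y⁻¹ * e x * y) : Matrix (Fin 2) (Fin 2) K) 0 0) *
            χ₂ ((↑(y⁻¹ * e x * y) : Matrix (Fin 2) (Fin 2) K) 1 1)
        else 0) with hF
  -- the embedding of Kˣ into Lˣ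
  set φ : Kˣ →* Lˣ := Units.map (algebraMap K L : K →* L) with hφ
  have hφcoe : ∀ u : Kˣ, ((φ u : Lˣ) : L) = algebraMap K L (u : K) := fun u => rfl
  have hinj : Function.Injective φ := by
    intro a c hac
    ext
    exact (algebraMap K L).injective (congrArg Units.val hac)
  -- matrix of e (φ u)
  have hex : ∀ u : Kˣ, (↑(e (φ u)) : Matrix (Fin 2) (Fin 2) K) =
      (u : K) • (1 : Matrix (Fin 2) (Fin 2) K) := by
    intro u
    rw [he, hφcoe]
    have h1 : LinearMap.mulLeft K (algebraMap K L (u : K)) =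
        (u : K) • (LinearMap.id : L →ₗ[K] L) := by
      ext v
      simp [LinearMap.mulLeft_apply, Algebra.smul_def]
    rw [h1, map_smul, LinearMap.toMatrix_id]
  -- conjugates of scalars are scalars
  have hconj : ∀ (u : Kˣ) (y : Matrix.GeneralLinearGroup (Fin 2) K),
      (↑(y⁻¹ * e (φ u) * y) : Matrix (Fin 2) (Fin 2) K) =
        (u : K) • (1 : Matrix (Fin 2) (Fin 2) K) := by
    intro u y
    have hc : e (φ u) * y = y * e (φ u) := by
      apply Matrix.GeneralLinearGroup.ext
      intro i j
      have : (↑(e (φ u) * y) : Matrix (Fin 2) (Fin 2) K) =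
          (↑(y * e (φ u)) : Matrix (Fin 2) (Fin 2) K) := by
        rw [Units.val_mul, Units.val_mul, hex, smul_mul_assoc, mul_smul_comm, one_mul, mul_one]
      rw [this]
    rw [mul_assoc, hc, ← mul_assoc, inv_mul_cancel, one_mul, hex]
  -- elliptic elements have no conjugate in B
  have hell : ∀ x : Lˣ, (∀ c : K, (x : L) ≠ algebraMap K L c) →
      ∀ y : Matrix.GeneralLinearGroup (Fin 2) K,
        (↑(y⁻¹ * e x * y) : Matrix (Fin 2) (Fin 2) K) 1 0 ≠ 0 := by
    intro x hx y h10
    set A : Matrix (Fin 2) (Fin 2) K := ↑(e x) with hA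
    set M : Matrix (Fin 2) (Fin 2) K := ↑(y⁻¹ * e x * y) with hM
    set c : K := M 0 0 with hc
    have hyy : (↑(y⁻¹) : Matrix (Fin 2) (Fin 2) K) * (↑y : Matrix (Fin 2) (Fin 2) K) = 1 := by
      rw [← Units.val_mul, inv_mul_cancel, Units.val_one]
    -- det (M - c • 1) = 0
    have hdet0 : (M - c • 1).det = 0 := by
      rw [Matrix.det_fin_two]
      have e1 : (M - c • (1 : Matrix (Fin 2) (Fin 2) K)) 0 0 = 0 := by
        simp [Matrix.sub_apply, Matrix.smul_apply, Matrix.one_apply, hc]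
      have e2 : (M - c • (1 : Matrix (Fin 2) (Fin 2) K)) 1 0 = 0 := by
        simp [Matrix.sub_apply, Matrix.smul_apply, Matrix.one_apply, h10]
      rw [e1, e2, zero_mul, mul_zero, sub_zero]
    -- conjugation invariance
    have hMA : M - c • 1 = (↑(y⁻¹) : Matrix (Fin 2) (Fin 2) K) *
        ((A - c • 1) * (↑y : Matrix (Fin 2) (Fin 2) K)) := by
      have hMval : M = (↑(y⁻¹) : Matrix (Fin 2) (Fin 2) K) *
          (A * (↑y : Matrix (Fin 2) (Fin 2) K)) := by
        rw [hM, Units.val_mul, Units.val_mul, mul_assoc]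
      rw [hMval, sub_mul, mul_sub, smul_mul_assoc, one_mul, mul_smul_comm, hyy]
    have hAdet : (A - c • 1).det = 0 := by
      have h1 : ((↑(y⁻¹) : Matrix (Fin 2) (Fin 2) K)).det *
          ((↑y : Matrix (Fin 2) (Fin 2) K)).det = 1 := by
        rw [← Matrix.det_mul, hyy, Matrix.det_one]
      rw [hMA, Matrix.det_mul, Matrix.det_mul] at hdet0
      rcases mul_eq_zero.mp hdet0 with h | h
      · exact absurd h (left_ne_zero_of_mul (h1 ▸ one_ne_zero))
      · rcases mul_eq_zero.mp h with h' | h'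
        · exact h'
        · exact absurd h' (right_ne_zero_of_mul (h1 ▸ one_ne_zero))
      -- fallback
    -- identify A - c•1 as the matrix of multiplication by x - c
    have hz : ((x : L) - algebraMap K L c) ≠ 0 := sub_ne_zero.mpr (hx c)
    have hAc : A - c • 1 = LinearMap.toMatrix b b
        (LinearMap.mulLeft K ((x : L) - algebraMap K L c)) := by
      have h1 : LinearMap.mulLeft K ((x : L) - algebraMap K L c) =
          LinearMap.mulLeft K (x : L) - c • (LinearMap.id : L →ₗ[K] L) := by
        ext v
        simp [LinearMap.mulLeft_apply, sub_mul, Algebra.smul_def]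
      rw [h1, map_sub, map_smul, LinearMap.toMatrix_id, hA, he]
    have hunit : (LinearMap.toMatrix b b
          (LinearMap.mulLeft K ((x : L) - algebraMap K L c))) *
        (LinearMap.toMatrix b b
          (LinearMap.mulLeft K ((x : L) - algebraMap K L c)⁻¹)) = 1 := by
      rw [← LinearMap.toMatrix_mul, Module.End.mul_eq_comp, ← LinearMap.mulLeft_mul, mul_inv_cancel₀ hz,
        LinearMap.mulLeft_one, LinearMap.toMatrix_id]
    have : (LinearMap.toMatrix b b
        (LinearMap.mulLeft K ((x : L) - algebraMap K L c))).det ≠ 0 := by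
      intro h0
      have := congrArg Matrix.det hunit
      rw [Matrix.det_mul, h0, zero_mul, Matrix.det_one] at this
      exact zero_ne_one this
    rw [hAc] at hAdet
    exact this hAdet
  -- step 1: terms outside the image of φ vanish
  have hvanish : ∀ x : Lˣ, (∀ c : K, (x : L) ≠ algebraMap K L c) → F x = 0 := by
    intro x hx
    rw [hF]
    simp only
    rw [Finset.sum_eq_zero, mul_zero]
    intro y _
    rw [if_neg (hell x hx y)]
  have himg : ∑ x : Lˣ, F x = ∑ u : Kˣ, F (φ u) := by
    have h1 : ∑ x : Lˣ, F x = ∑ x ∈ Finset.univ.image φ, F x := by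
      symm
      apply Finset.sum_subset (Finset.subset_univ _)
      intro x _ hx
      apply hvanish
      intro c hc
      apply hx
      have hc0 : c ≠ 0 := by
        intro h0
        exact Units.ne_zero x (by rw [hc, h0, map_zero])
      refine Finset.mem_image.mpr ⟨Units.mk0 c hc0, Finset.mem_univ _, ?_⟩
      ext
      rw [hφcoe]
      exact hc.symm
    rw [h1, Finset.sum_image (fun a _ c _ h => hinj h)]
  -- step 2: value on the image of φ
  have hFu : ∀ u : Kˣ, F (φ u) =
      ((1 : ℂ) / (NB : ℂ)) * ((Fintype.card (Matrix.GeneralLinearGroup (Fin 2) K) : ℂ) *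
        (χ₁ (u : K) * χ₂ (u : K))) := by
    intro u
    rw [hF]
    simp only
    congr 1
    have h2 : ∀ y : Matrix.GeneralLinearGroup (Fin 2) K,
        (if (↑(y⁻¹ * e (φ u) * y) : Matrix (Fin 2) (Fin 2) K) 1 0 = 0 then
          χ₁ ((↑(y⁻¹ * e (φ u) * y) : Matrix (Fin 2) (Fin 2) K) 0 0) *
            χ₂ ((↑(y⁻¹ * e (φ u) * y) : Matrix (Fin 2) (Fin 2) K) 1 1)
        else 0) = χ₁ (u : K) * χ₂ (u : K) := by
      intro y
      rw [hconj u y]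
      simp [Matrix.smul_apply, Matrix.one_apply]
    rw [Finset.sum_congr rfl (fun y _ => h2 y), Finset.sum_const, Finset.card_univ,
      nsmul_eq_mul]
  -- cardinalities
  have hNG : (Fintype.card (Matrix.GeneralLinearGroup (Fin 2) K) : ℕ) =
      (q ^ 2 - 1) * (q ^ 2 - q) := by
    have h := Matrix.card_GL_field (𝔽 := K) 2
    rw [Nat.card_eq_fintype_card] at h
    rw [h, Fin.prod_univ_two]
    norm_num
    rfl
  have hNB : NB = (q - 1) * (q * (q - 1)) := card_borel_aux K
  have hLu : Nat.card Lˣ = q ^ 2 - 1 := by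
    rw [Nat.card_eq_fintype_card, Fintype.card_units, Module.card_fintype b,
      Fintype.card_fin]
  -- cast facts
  have h1q : 1 ≤ q := le_of_lt hq2
  have h1q2 : 1 ≤ q ^ 2 := Nat.one_le_pow _ _ (lt_of_lt_of_le Nat.zero_lt_one h1q)
  have hqq2 : q ≤ q ^ 2 := by nlinarith
  have hcast1 : ((q ^ 2 - 1 : ℕ) : ℂ) = (q : ℂ) ^ 2 - 1 := by
    push_cast [Nat.cast_sub h1q2]; ring
  have hcast2 : ((q - 1 : ℕ) : ℂ) = (q : ℂ) - 1 := by
    push_cast [Nat.cast_sub h1q]; ring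
  have hcast3 : ((q ^ 2 - q : ℕ) : ℂ) = (q : ℂ) ^ 2 - (q : ℂ) := by
    push_cast [Nat.cast_sub hqq2]; ring
  have hane : ((q : ℂ) - 1) ≠ 0 := by
    rw [← hcast2, Ne, Nat.cast_eq_zero]
    omega
  have hane2 : ((q : ℂ) + 1) ≠ 0 := by
    have : ((q : ℂ) + 1) = ((q + 1 : ℕ) : ℂ) := by push_cast; ring
    rw [this, Ne, Nat.cast_eq_zero]
    omega
  have haq : (q : ℂ) ≠ 0 := by
    rw [Ne, Nat.cast_eq_zero]
    omega
  have ha2 : ((q : ℂ) ^ 2 - 1) ≠ 0 := by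
    have : (q : ℂ) ^ 2 - 1 = ((q : ℂ) - 1) * ((q : ℂ) + 1) := by ring
    rw [this]
    exact mul_ne_zero hane hane2
  -- conclude
  rw [himg, Finset.sum_congr rfl (fun u _ => hFu u), hLu]
  by_cases h : ∀ u : K, u ≠ 0 → χ₁ u * χ₂ u = 1
  · rw [if_pos h]
    have h3 : ∀ u : Kˣ, ((1 : ℂ) / (NB : ℂ)) *
        ((Fintype.card (Matrix.GeneralLinearGroup (Fin 2) K) : ℂ) *
          (χ₁ (u : K) * χ₂ (u : K))) =
        ((1 : ℂ) / (NB : ℂ)) * (Fintype.card (Matrix.GeneralLinearGroup (Fin 2) K) : ℂ) := by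
      intro u
      rw [h (u : K) u.ne_zero, mul_one]
    rw [Finset.sum_congr rfl (fun u _ => h3 u), Finset.sum_const, Finset.card_univ,
      Fintype.card_units, ← hqdef, nsmul_eq_mul, hNG, hNB]
    push_cast [Nat.cast_sub h1q2, Nat.cast_sub h1q, Nat.cast_sub hqq2]
    field_simp
  · rw [if_neg h]
    push_neg at h
    obtain ⟨t0, ht0, ht1⟩ := h
    set t : Kˣ := Units.mk0 t0 ht0 with htdef
    have hS : ∑ u : Kˣ, (χ₁ (u : K) * χ₂ (u : K)) = 0 := by
      have htrans : (χ₁ (t : K) * χ₂ (t : K)) * ∑ u : Kˣ, (χ₁ (u : K) * χ₂ (u : K)) =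
          ∑ u : Kˣ, (χ₁ (u : K) * χ₂ (u : K)) := by
        rw [Finset.mul_sum]
        calc ∑ v : Kˣ, (χ₁ (t : K) * χ₂ (t : K)) * (χ₁ (v : K) * χ₂ (v : K))
            = ∑ v : Kˣ, (χ₁ ((t * v : Kˣ) : K) * χ₂ ((t * v : Kˣ) : K)) := by
              apply Finset.sum_congr rfl
              intro v _
              simp only [Units.val_mul, map_mul]
              ring
          _ = ∑ u : Kˣ, (χ₁ (u : K) * χ₂ (u : K)) :=
              Fintype.sum_bijective (fun v => t * v) (Group.mulLeft_bijective t)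
                _ _ (fun v => rfl)
      have hzero : (χ₁ (t : K) * χ₂ (t : K) - 1) *
          (∑ u : Kˣ, (χ₁ (u : K) * χ₂ (u : K))) = 0 := by
        rw [sub_mul, one_mul, htrans, sub_self]
      rcases mul_eq_zero.mp hzero with h' | h'
      · exact absurd (by linear_combination h' : χ₁ (t : K) * χ₂ (t : K) = 1) ht1
      · exact h'
    have h4 : ∑ u : Kˣ, ((1 : ℂ) / (NB : ℂ)) *
        ((Fintype.card (Matrix.GeneralLinearGroup (Fin 2) K) : ℂ) *
          (χ₁ (u : K) * χ₂ (u : K))) =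
        ((1 : ℂ) / (NB : ℂ)) * (Fintype.card (Matrix.GeneralLinearGroup (Fin 2) K) : ℂ) *
          ∑ u : Kˣ, (χ₁ (u : K) * χ₂ (u : K)) := by
      rw [Finset.mul_sum]
      apply Finset.sum_congr rfl
      intro u _
      ring
    rw [h4, hS, mul_zero, mul_zero]
end

section
/- Let F_Q ⊂ F_{Q^2} be finite fields and embed F_{Q^2}^× into G = GL_2(F_Q) via multiplication on F_{Q^2}. Let B be the stabilizer in G of a fixed line of F_{Q^2}. Then G = B · F_{Q^2}^× = F_{Q^2}^× · B, and B ∩ F_{Q^2}^× = F_Q^×. -/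
open Module Submodule

section aux
variable {K L : Type*} [Field K] [Field L] [Algebra K L] [FiniteDimensional K L]

lemma line_gen (p : Submodule K L) (hp : finrank K p = 1) :
    ∃ v : L, v ≠ 0 ∧ p = span K {v} := by
  have : Nontrivial p := Module.nontrivial_of_finrank_pos (R := K) (by omega)
  obtain ⟨⟨v, hv⟩, hvne⟩ := exists_ne (0 : p)
  have hv0 : v ≠ 0 := by simpa [Subtype.ext_iff] using hvne
  refine ⟨v, hv0, ?_⟩
  have h1 : span K {v} ≤ p := by simpa [span_le] using hv
  have h2 : finrank K (span K {v}) = 1 := finrank_span_singleton hv0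
  exact (Submodule.eq_of_le_of_finrank_le h1 (by rw [h2, hp])).symm

lemma line_trans (p q : Submodule K L) (hp : finrank K p = 1) (hq : finrank K q = 1) :
    ∃ x : Lˣ, p.map (LinearMap.mulLeft K (x : L)) = q := by
  obtain ⟨v, hv, rfl⟩ := line_gen p hp
  obtain ⟨w, hw, rfl⟩ := line_gen q hq
  refine ⟨Units.mk0 (w * v⁻¹) (by simp [hw, hv]), ?_⟩
  rw [Submodule.map_span]
  congr 1
  simp [Set.image_singleton, LinearMap.mulLeft_apply, mul_assoc, inv_mul_cancel₀ hv]
end aux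

/-- Embed `F_{Q^2}^×` into `G = GL(F_{Q^2}) = (End_{F_Q}(F_{Q^2}))ˣ` via
multiplication, and let `B` be the stabilizer of a fixed line `d`.  Then
`G = B·F_{Q^2}^× = F_{Q^2}^×·B` and `B ∩ F_{Q^2}^× = F_Q^×`. -/
theorem stmt_7 (K L : Type*) [Field K] [Field L] [Algebra K L]
    [Fintype K] [Fintype L]
    (hdim : Module.finrank K L = 2)
    (d : Submodule K L) (hd : Module.finrank K d = 1)
    (e : Lˣ →* (Module.End K L)ˣ)
    (he : ∀ x : Lˣ, (↑(e x) : Module.End K L) = LinearMap.mulLeft K (x : L)) :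
    (∀ g : (Module.End K L)ˣ, ∃ b : (Module.End K L)ˣ, ∃ x : Lˣ,
      d.map (↑b : Module.End K L) = d ∧ g = b * e x) ∧
    (∀ g : (Module.End K L)ˣ, ∃ x : Lˣ, ∃ b : (Module.End K L)ˣ,
      d.map (↑b : Module.End K L) = d ∧ g = e x * b) ∧
    (∀ x : Lˣ, d.map (↑(e x) : Module.End K L) = d ↔
      ∃ c : Kˣ, (x : L) = algebraMap K L (c : K)) := by
  have : FiniteDimensional K L := .of_finrank_eq_succ hdim
  -- map under a unit preserves finrank
  have hmapfin : ∀ (u : (Module.End K L)ˣ) (p : Submodule K L),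
      finrank K (p.map (↑u : Module.End K L)) = finrank K p := by
    intro u p
    have := LinearEquiv.finrank_map_eq (LinearMap.GeneralLinearGroup.generalLinearEquiv K L u) p
    rwa [LinearMap.GeneralLinearGroup.generalLinearEquiv_to_linearMap] at this
  have hcancel : ∀ (u : (Module.End K L)ˣ) (p : Submodule K L),
      (p.map (↑u : Module.End K L)).map (↑u⁻¹ : Module.End K L) = p := by
    intro u p
    rw [← Submodule.map_comp, ← Module.End.mul_eq_comp, ← Units.val_mul, inv_mul_cancel u,
      Units.val_one]
    exact Submodule.map_id p
  refine ⟨?_, ?_, ?_⟩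
  · intro g
    obtain ⟨x, hx⟩ := line_trans (d.map (↑g⁻¹ : Module.End K L)) d
      (by rw [hmapfin]; exact hd) hd
    refine ⟨g * (e x)⁻¹, x, ?_, by rw [mul_assoc]; simp⟩
    rw [← he x] at hx
    have hinv : d.map (↑(e x)⁻¹ : Module.End K L) = d.map (↑g⁻¹ : Module.End K L) := by
      conv_lhs => rw [← hx, hcancel]
    calc d.map (↑(g * (e x)⁻¹) : Module.End K L)
        = (d.map (↑(e x)⁻¹ : Module.End K L)).map (↑g : Module.End K L) := by
          rw [Units.val_mul, Module.End.mul_eq_comp, Submodule.map_comp]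
      _ = d := by rw [hinv]; simpa using hcancel g⁻¹ d
  · intro g
    obtain ⟨x, hx⟩ := line_trans d (d.map (↑g : Module.End K L)) hd
      (by rw [hmapfin]; exact hd)
    refine ⟨x, (e x)⁻¹ * g, ?_, by rw [← mul_assoc]; simp⟩
    rw [← he x] at hx
    calc d.map (↑((e x)⁻¹ * g) : Module.End K L)
        = (d.map (↑g : Module.End K L)).map (↑(e x)⁻¹ : Module.End K L) := by
          rw [Units.val_mul, Module.End.mul_eq_comp, Submodule.map_comp]
      _ = d := by rw [← hx, hcancel]
  · intro x
    obtain ⟨v, hv, hdv⟩ := line_gen d hd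
    constructor
    · intro h
      have hvmem : v ∈ d := hdv ▸ Submodule.mem_span_singleton_self v
      have hxv : (x : L) * v ∈ d := by
        rw [← h]
        exact ⟨v, hvmem, by rw [he x]; rfl⟩
      rw [hdv, Submodule.mem_span_singleton] at hxv
      obtain ⟨c, hc⟩ := hxv
      have hc0 : c ≠ 0 := by
        rintro rfl
        simp only [zero_smul] at hc
        exact (mul_ne_zero x.ne_zero hv) hc.symm
      refine ⟨Units.mk0 c hc0, ?_⟩
      have : (x : L) * v = algebraMap K L c * v := by rw [← Algebra.smul_def, hc]
      exact mul_right_cancel₀ hv this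
    · rintro ⟨c, hc⟩
      rw [he x]
      apply le_antisymm
      · rintro _ ⟨w, hw, rfl⟩
        simpa [LinearMap.mulLeft_apply, hc, ← Algebra.smul_def] using d.smul_mem (c : K) hw
      · intro w hw
        refine ⟨(c : K)⁻¹ • w, d.smul_mem _ hw, ?_⟩
        simp [LinearMap.mulLeft_apply, hc, ← Algebra.smul_def, smul_smul,
          mul_inv_cancel₀ c.ne_zero]
end

section
/- Let k ⊂ k_Δ ⊂ k_D be finite fields with [k_D : k_Δ] = 2, G = GL_2(k_Δ), B its upper triangular Borel subgroup, and K = { u·[[1,0],[w,1]] : u ∈ k_Δ^×, w ∈ k_Δ } the subgroup of lower triangular matrices with equal diagonal entries. Let χ_1, χ_2 be characters of k_Δ^×. Then ⟨χ_{Ind_B^G(χ_1⊗χ_2)}, 1⟩_K = (2/(|k_Δ|-1)) · Σ_{u ∈ k_Δ^×} χ_1(u) χ_2(u). In particular this inner product equals 2 if χ_1·χ_2 is trivial on k_Δ^×, and 0 otherwise. -/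
open Classical

section Aux
open Matrix
variable {kΔ : Type*} [Field kΔ] [DecidableEq kΔ] [Fintype kΔ]

omit [Fintype kΔ] in
lemma aux_coe (x g : GL (Fin 2) kΔ) : (↑(x⁻¹ * g * x) : Matrix (Fin 2) (Fin 2) kΔ)
      = ((↑x : Matrix (Fin 2) (Fin 2) kΔ))⁻¹ * (↑g : Matrix (Fin 2) (Fin 2) kΔ) * (↑x : Matrix (Fin 2) (Fin 2) kΔ) := by
  simp [Matrix.coe_units_inv]

omit [Fintype kΔ] in
lemma aux10 (x : GL (Fin 2) kΔ) (u : kΔˣ) (w : kΔ) (g : GL (Fin 2) kΔ)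
    (hg : (↑g : Matrix (Fin 2) (Fin 2) kΔ) = (u:kΔ) • !![1,0;w,1]) :
    (↑(x⁻¹ * g * x) : Matrix (Fin 2) (Fin 2) kΔ) 1 0
      = (u:kΔ) * (det (↑x : Matrix (Fin 2) (Fin 2) kΔ))⁻¹ * ((↑x : Matrix (Fin 2) (Fin 2) kΔ) 0 0 ^2 * w) := by
  rw [aux_coe, hg, Matrix.inv_def, Matrix.adjugate_fin_two]
  simp [Matrix.mul_apply, Fin.sum_univ_two, Ring.inverse_eq_inv']
  ring

omit [Fintype kΔ] in
lemma aux00 (x : GL (Fin 2) kΔ) (u : kΔˣ) (w : kΔ) (g : GL (Fin 2) kΔ)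
    (hg : (↑g : Matrix (Fin 2) (Fin 2) kΔ) = (u:kΔ) • !![1,0;w,1]) :
    (↑(x⁻¹ * g * x) : Matrix (Fin 2) (Fin 2) kΔ) 0 0
      = (u:kΔ) * (det (↑x : Matrix (Fin 2) (Fin 2) kΔ))⁻¹ *
        (det (↑x : Matrix (Fin 2) (Fin 2) kΔ) - (↑x : Matrix (Fin 2) (Fin 2) kΔ) 0 0 * (↑x : Matrix (Fin 2) (Fin 2) kΔ) 0 1 * w) := by
  rw [aux_coe, hg, Matrix.inv_def, Matrix.adjugate_fin_two]
  simp [Matrix.mul_apply, Fin.sum_univ_two, Ring.inverse_eq_inv', Matrix.det_fin_two]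
  ring

omit [Fintype kΔ] in
lemma aux11 (x : GL (Fin 2) kΔ) (u : kΔˣ) (w : kΔ) (g : GL (Fin 2) kΔ)
    (hg : (↑g : Matrix (Fin 2) (Fin 2) kΔ) = (u:kΔ) • !![1,0;w,1]) :
    (↑(x⁻¹ * g * x) : Matrix (Fin 2) (Fin 2) kΔ) 1 1
      = (u:kΔ) * (det (↑x : Matrix (Fin 2) (Fin 2) kΔ))⁻¹ *
        (det (↑x : Matrix (Fin 2) (Fin 2) kΔ) + (↑x : Matrix (Fin 2) (Fin 2) kΔ) 0 0 * (↑x : Matrix (Fin 2) (Fin 2) kΔ) 0 1 * w) := by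
  rw [aux_coe, hg, Matrix.inv_def, Matrix.adjugate_fin_two]
  simp [Matrix.mul_apply, Fin.sum_univ_two, Ring.inverse_eq_inv', Matrix.det_fin_two]
  ring

omit [Fintype kΔ] in
lemma aux_det (x : GL (Fin 2) kΔ) : det (↑x : Matrix (Fin 2) (Fin 2) kΔ) ≠ 0 := by
  simpa using (Matrix.GeneralLinearGroup.det x).ne_zero

omit [Fintype kΔ] in
lemma aux_key (χ₁ χ₂ : MulChar kΔ ℂ) (x : GL (Fin 2) kΔ) (u : kΔˣ) (w : kΔ) (g : GL (Fin 2) kΔ)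
    (hg : (↑g : Matrix (Fin 2) (Fin 2) kΔ) = (u:kΔ) • !![1,0;w,1]) :
    (if (↑(x⁻¹ * g * x) : Matrix (Fin 2) (Fin 2) kΔ) 1 0 = 0 then
            χ₁ ((↑(x⁻¹ * g * x) : Matrix (Fin 2) (Fin 2) kΔ) 0 0) *
              χ₂ ((↑(x⁻¹ * g * x) : Matrix (Fin 2) (Fin 2) kΔ) 1 1)
          else 0)
      = (if (↑x : Matrix (Fin 2) (Fin 2) kΔ) 0 0 ^ 2 * w = 0 then χ₁ (u:kΔ) * χ₂ (u:kΔ) else 0) := by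
  have he := aux_det x
  have h10 := aux10 x u w g hg
  by_cases h : (↑x : Matrix (Fin 2) (Fin 2) kΔ) 0 0 ^ 2 * w = 0
  · have habw : (↑x : Matrix (Fin 2) (Fin 2) kΔ) 0 0 * (↑x : Matrix (Fin 2) (Fin 2) kΔ) 0 1 * w = 0 := by
      rcases mul_eq_zero.1 h with h' | h'
      · rw [pow_eq_zero_iff (by norm_num)] at h'; rw [h']; ring
      · rw [h']; ring
    rw [if_pos h, if_pos (by rw [h10, h]; ring), aux00 x u w g hg, aux11 x u w g hg, habw]
    rw [sub_zero, add_zero, mul_assoc, inv_mul_cancel₀ he, mul_one]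
  · rw [if_neg h, if_neg]
    rw [h10]
    exact mul_ne_zero (mul_ne_zero u.ne_zero (inv_ne_zero he)) h

noncomputable def auxEquiv : {b : GL (Fin 2) kΔ // (↑b : Matrix (Fin 2) (Fin 2) kΔ) 1 0 = 0}
    ≃ kΔˣ × kΔˣ × kΔ where
  toFun b := by
    have hdet : det (↑b.1 : Matrix (Fin 2) (Fin 2) kΔ) ≠ 0 := by
      simpa using (Matrix.GeneralLinearGroup.det b.1).ne_zero
    rw [Matrix.det_fin_two, b.2, mul_zero, sub_zero] at hdet
    exact (Units.mk0 _ (left_ne_zero_of_mul hdet), Units.mk0 _ (right_ne_zero_of_mul hdet),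
      (↑b.1 : Matrix (Fin 2) (Fin 2) kΔ) 0 1)
  invFun p := ⟨Matrix.GeneralLinearGroup.mkOfDetNeZero !![(p.1:kΔ), p.2.2; 0, (p.2.1:kΔ)]
      (by simp [Matrix.det_fin_two]), by
    show !![(p.1:kΔ), p.2.2; 0, (p.2.1:kΔ)] 1 0 = 0; simp⟩
  left_inv b := by
    ext i j
    show (!![_,_;_,_] : Matrix (Fin 2) (Fin 2) kΔ) i j = (↑b.1 : Matrix (Fin 2) (Fin 2) kΔ) i j
    fin_cases i <;> fin_cases j <;> simp [b.2.symm]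
  right_inv p := by
    ext <;> rfl

lemma aux_cardB : ((Finset.univ.filter fun b : GL (Fin 2) kΔ =>
      (↑b : Matrix (Fin 2) (Fin 2) kΔ) 1 0 = 0).card : ℕ)
    = (Fintype.card kΔ - 1)^2 * Fintype.card kΔ := by
  rw [← Fintype.card_subtype, Fintype.card_congr auxEquiv]
  simp [Fintype.card_units, sq, mul_assoc]

lemma aux_cardG : (Fintype.card (GL (Fin 2) kΔ) : ℕ)
    = (Fintype.card kΔ ^ 2 - 1) * (Fintype.card kΔ ^ 2 - Fintype.card kΔ) := by
  rw [← Nat.card_eq_fintype_card, Matrix.card_GL_field]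
  simp [Fin.prod_univ_two]

noncomputable def auxS (kΔ : Type*) [Field kΔ] [DecidableEq kΔ] : GL (Fin 2) kΔ :=
  Matrix.GeneralLinearGroup.mkOfDetNeZero !![0,1;1,0] (by simp [Matrix.det_fin_two])

omit [Fintype kΔ] in
lemma auxS_mul (x : GL (Fin 2) kΔ) (i : Fin 2) :
    (↑(auxS kΔ * x) : Matrix (Fin 2) (Fin 2) kΔ) 1 i = (↑x : Matrix (Fin 2) (Fin 2) kΔ) 0 i ∧
    (↑(auxS kΔ * x) : Matrix (Fin 2) (Fin 2) kΔ) 0 i = (↑x : Matrix (Fin 2) (Fin 2) kΔ) 1 i := by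
  constructor <;>
  · show (!![(0:kΔ),1;1,0] * (↑x : Matrix (Fin 2) (Fin 2) kΔ)) _ i = _
    simp [Matrix.mul_apply, Fin.sum_univ_two]

omit [Fintype kΔ] in
lemma auxS_sq : auxS kΔ * auxS kΔ = 1 := by
  ext i j
  show (!![(0:kΔ),1;1,0] * (!![0,1;1,0] : Matrix (Fin 2) (Fin 2) kΔ)) i j = _
  fin_cases i <;> fin_cases j <;> simp [Matrix.mul_apply, Fin.sum_univ_two]

lemma aux_swapcard : ((Finset.univ.filter fun x : GL (Fin 2) kΔ =>
      (↑x : Matrix (Fin 2) (Fin 2) kΔ) 0 0 = 0).card)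
    = ((Finset.univ.filter fun b : GL (Fin 2) kΔ =>
      (↑b : Matrix (Fin 2) (Fin 2) kΔ) 1 0 = 0).card) := by
  refine Finset.card_nbij' (fun x => auxS kΔ * x) (fun x => auxS kΔ * x) ?_ ?_ ?_ ?_
  · intro a ha
    simp only [Finset.mem_coe, Finset.mem_filter, Finset.mem_univ, true_and] at ha ⊢
    rw [(auxS_mul a 0).1, ha]
  · intro a ha
    simp only [Finset.mem_coe, Finset.mem_filter, Finset.mem_univ, true_and] at ha ⊢
    rw [(auxS_mul a 0).2, ha]
  · intro a _; show auxS kΔ * (auxS kΔ * a) = a; rw [← mul_assoc, auxS_sq, one_mul]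
  · intro a _; show auxS kΔ * (auxS kΔ * a) = a; rw [← mul_assoc, auxS_sq, one_mul]

lemma aux_units_sum (f : kΔ → ℂ) (h0 : f 0 = 0) :
    ∑ u : kΔˣ, f ↑u = ∑ a : kΔ, f a := by
  have h1 : ∑ u : kΔˣ, f ↑u = ∑ a : {a : kΔ // a ≠ 0}, f ↑a :=
    Fintype.sum_equiv (unitsEquivNeZero (G₀ := kΔ)) (fun u => f (u : kΔ)) (fun a => f (a : kΔ)) (fun _ => rfl)
  rw [h1, ← Finset.sum_subtype (Finset.univ.erase 0) (fun x => by simp [Finset.mem_erase]) f]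
  rw [Finset.sum_erase _ h0]

end Aux

/-- Let `k ⊆ k_Δ ⊆ k_D` be finite fields with `[k_D : k_Δ] = 2`, `G = GL₂(k_Δ)`,
`B` its upper triangular Borel (matrices with `(1,0)`-entry zero) and
`K' = { u·[[1,0],[w,1]] : u ∈ k_Δ^×, w ∈ k_Δ }`.  For characters `χ₁, χ₂` of
`k_Δ^×`, the inner product over `K'` of the character of `Ind_B^G(χ₁⊗χ₂)` with
the trivial character equals `(2/(Q-1))·∑_{u ∈ k_Δ^×} χ₁(u)χ₂(u)`; in particular
it equals `2` if `χ₁·χ₂` is trivial on `k_Δ^×` and `0` otherwise. -/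
theorem stmt_13 (k kΔ kD : Type*) [Field k] [Field kΔ] [Field kD]
    [Algebra k kΔ] [Algebra kΔ kD] [Algebra k kD] [IsScalarTower k kΔ kD]
    [Fintype k] [Fintype kΔ] [Fintype kD] [DecidableEq kΔ]
    (hdim : Module.finrank kΔ kD = 2)
    (Q : ℕ) (hQ : Fintype.card kΔ = Q)
    (χ₁ χ₂ : MulChar kΔ ℂ)
    (m : kΔˣ → kΔ → Matrix.GeneralLinearGroup (Fin 2) kΔ)
    (hm : ∀ (u : kΔˣ) (w : kΔ),
      (↑(m u w) : Matrix (Fin 2) (Fin 2) kΔ) = (u : kΔ) • !![1, 0; w, 1]) :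
    (1 / (((Q : ℂ) - 1) * (Q : ℂ))) * (∑ u : kΔˣ, ∑ w : kΔ,
      ((1 : ℂ) / ((Finset.univ.filter fun b : Matrix.GeneralLinearGroup (Fin 2) kΔ =>
          (↑b : Matrix (Fin 2) (Fin 2) kΔ) 1 0 = 0).card : ℂ)) *
        ∑ x : Matrix.GeneralLinearGroup (Fin 2) kΔ,
          (if (↑(x⁻¹ * m u w * x) : Matrix (Fin 2) (Fin 2) kΔ) 1 0 = 0 then
            χ₁ ((↑(x⁻¹ * m u w * x) : Matrix (Fin 2) (Fin 2) kΔ) 0 0) *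
              χ₂ ((↑(x⁻¹ * m u w * x) : Matrix (Fin 2) (Fin 2) kΔ) 1 1)
          else 0)) =
      (2 / ((Q : ℂ) - 1)) * ∑ u : kΔˣ, χ₁ (u : kΔ) * χ₂ (u : kΔ) ∧
    (1 / (((Q : ℂ) - 1) * (Q : ℂ))) * (∑ u : kΔˣ, ∑ w : kΔ,
      ((1 : ℂ) / ((Finset.univ.filter fun b : Matrix.GeneralLinearGroup (Fin 2) kΔ =>
          (↑b : Matrix (Fin 2) (Fin 2) kΔ) 1 0 = 0).card : ℂ)) *
        ∑ x : Matrix.GeneralLinearGroup (Fin 2) kΔ,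
          (if (↑(x⁻¹ * m u w * x) : Matrix (Fin 2) (Fin 2) kΔ) 1 0 = 0 then
            χ₁ ((↑(x⁻¹ * m u w * x) : Matrix (Fin 2) (Fin 2) kΔ) 0 0) *
              χ₂ ((↑(x⁻¹ * m u w * x) : Matrix (Fin 2) (Fin 2) kΔ) 1 1)
          else 0)) =
      if ∀ v : kΔ, v ≠ 0 → χ₁ v * χ₂ v = 1 then 2 else 0 := by
  have hQ2 : 2 ≤ Q := by rw [← hQ]; exact Fintype.one_lt_card
  have hq0 : (Q : ℂ) ≠ 0 := Nat.cast_ne_zero.2 (by omega)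
  have hq1 : (Q : ℂ) - 1 ≠ 0 := sub_ne_zero.2 (by exact_mod_cast (by omega : Q ≠ 1))
  have hB : (((Finset.univ.filter fun b : Matrix.GeneralLinearGroup (Fin 2) kΔ =>
        (↑b : Matrix (Fin 2) (Fin 2) kΔ) 1 0 = 0).card : ℕ) : ℂ)
      = ((Q : ℂ) - 1)^2 * (Q : ℂ) := by
    rw [aux_cardB, hQ]
    push_cast [Nat.cast_sub (by omega : 1 ≤ Q)]
    ring
  have hG : ((Fintype.card (Matrix.GeneralLinearGroup (Fin 2) kΔ) : ℕ) : ℂ)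
      = ((Q : ℂ)^2 - 1) * ((Q : ℂ)^2 - (Q : ℂ)) := by
    rw [aux_cardG, hQ]
    push_cast [Nat.cast_sub (by nlinarith : 1 ≤ Q ^ 2), Nat.cast_sub (by nlinarith : Q ≤ Q ^ 2)]
    ring
  -- per (u, w) sum over x
  have hx : ∀ (u : kΔˣ) (w : kΔ),
      (∑ x : Matrix.GeneralLinearGroup (Fin 2) kΔ,
          (if (↑(x⁻¹ * m u w * x) : Matrix (Fin 2) (Fin 2) kΔ) 1 0 = 0 then
            χ₁ ((↑(x⁻¹ * m u w * x) : Matrix (Fin 2) (Fin 2) kΔ) 0 0) *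
              χ₂ ((↑(x⁻¹ * m u w * x) : Matrix (Fin 2) (Fin 2) kΔ) 1 1)
          else 0))
      = if w = 0 then (Fintype.card (Matrix.GeneralLinearGroup (Fin 2) kΔ) : ℂ) * (χ₁ (u:kΔ) * χ₂ (u:kΔ))
        else ((Finset.univ.filter fun b : Matrix.GeneralLinearGroup (Fin 2) kΔ =>
          (↑b : Matrix (Fin 2) (Fin 2) kΔ) 1 0 = 0).card : ℂ) * (χ₁ (u:kΔ) * χ₂ (u:kΔ)) := by
    intro u w
    rw [Finset.sum_congr rfl (fun x _ => aux_key χ₁ χ₂ x u w (m u w) (hm u w))]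
    by_cases hw : w = 0
    · rw [if_pos hw]
      subst hw
      simp only [mul_zero, eq_self_iff_true, if_true]
      rw [Finset.sum_const, Finset.card_univ, nsmul_eq_mul]
    · rw [if_neg hw]
      have hcong : ∀ x : Matrix.GeneralLinearGroup (Fin 2) kΔ,
          (if (↑x : Matrix (Fin 2) (Fin 2) kΔ) 0 0 ^ 2 * w = 0 then χ₁ (u:kΔ) * χ₂ (u:kΔ) else 0)
          = (if (↑x : Matrix (Fin 2) (Fin 2) kΔ) 0 0 = 0 then χ₁ (u:kΔ) * χ₂ (u:kΔ) else 0) := by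
        intro x
        congr 1
        simp only [mul_eq_zero, pow_eq_zero_iff (two_ne_zero), or_iff_left hw, eq_iff_iff]
      rw [Finset.sum_congr rfl (fun x _ => hcong x), Finset.sum_ite, Finset.sum_const_zero,
        add_zero, Finset.sum_const, nsmul_eq_mul]
      congr 2
      exact aux_swapcard
  -- per u sum over w
  have hw : ∀ u : kΔˣ,
      (∑ w : kΔ,
      ((1 : ℂ) / ((Finset.univ.filter fun b : Matrix.GeneralLinearGroup (Fin 2) kΔ =>
          (↑b : Matrix (Fin 2) (Fin 2) kΔ) 1 0 = 0).card : ℂ)) *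
        ∑ x : Matrix.GeneralLinearGroup (Fin 2) kΔ,
          (if (↑(x⁻¹ * m u w * x) : Matrix (Fin 2) (Fin 2) kΔ) 1 0 = 0 then
            χ₁ ((↑(x⁻¹ * m u w * x) : Matrix (Fin 2) (Fin 2) kΔ) 0 0) *
              χ₂ ((↑(x⁻¹ * m u w * x) : Matrix (Fin 2) (Fin 2) kΔ) 1 1)
          else 0))
      = 2 * (Q : ℂ) * (χ₁ (u:kΔ) * χ₂ (u:kΔ)) := by
    intro u
    rw [← Finset.add_sum_erase _ _ (Finset.mem_univ (0 : kΔ))]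
    rw [hx u 0, if_pos rfl]
    rw [Finset.sum_congr rfl (fun w hwmem => by
      rw [hx u w, if_neg (Finset.mem_erase.1 hwmem).1])]
    rw [Finset.sum_const, Finset.card_erase_of_mem (Finset.mem_univ _), Finset.card_univ, hQ,
      nsmul_eq_mul, hB, hG]
    push_cast [Nat.cast_sub (by omega : 1 ≤ Q)]
    field_simp
    ring
  -- main identity
  have hmain : (1 / (((Q : ℂ) - 1) * (Q : ℂ))) * (∑ u : kΔˣ, ∑ w : kΔ,
      ((1 : ℂ) / ((Finset.univ.filter fun b : Matrix.GeneralLinearGroup (Fin 2) kΔ =>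
          (↑b : Matrix (Fin 2) (Fin 2) kΔ) 1 0 = 0).card : ℂ)) *
        ∑ x : Matrix.GeneralLinearGroup (Fin 2) kΔ,
          (if (↑(x⁻¹ * m u w * x) : Matrix (Fin 2) (Fin 2) kΔ) 1 0 = 0 then
            χ₁ ((↑(x⁻¹ * m u w * x) : Matrix (Fin 2) (Fin 2) kΔ) 0 0) *
              χ₂ ((↑(x⁻¹ * m u w * x) : Matrix (Fin 2) (Fin 2) kΔ) 1 1)
          else 0)) =
      (2 / ((Q : ℂ) - 1)) * ∑ u : kΔˣ, χ₁ (u : kΔ) * χ₂ (u : kΔ) := by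
    rw [Finset.sum_congr rfl (fun u _ => hw u), ← Finset.mul_sum]
    field_simp
  refine ⟨hmain, ?_⟩
  rw [hmain]
  by_cases htriv : ∀ v : kΔ, v ≠ 0 → χ₁ v * χ₂ v = 1
  · rw [if_pos htriv]
    rw [Finset.sum_congr rfl (fun u _ => htriv ((u : kΔˣ) : kΔ) (Units.ne_zero u)), Finset.sum_const,
      Finset.card_univ, Fintype.card_units, hQ, nsmul_eq_mul, mul_one]
    push_cast [Nat.cast_sub (by omega : 1 ≤ Q)]
    field_simp
  · rw [if_neg htriv]
    have hne : χ₁ * χ₂ ≠ 1 := by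
      intro h
      apply htriv
      intro v hv
      have := MulChar.eq_one_iff.1 h (Units.mk0 v hv)
      rwa [MulChar.mul_apply] at this
    have hsum0 : ∑ a : kΔ, (χ₁ * χ₂) a = 0 := MulChar.sum_eq_zero_of_ne_one hne
    have : ∑ u : kΔˣ, χ₁ (u : kΔ) * χ₂ (u : kΔ) = 0 := by
      have h0 : (χ₁ * χ₂) (0 : kΔ) = 0 :=
        MulChar.map_nonunit _ (by simp)
      calc ∑ u : kΔˣ, χ₁ (u : kΔ) * χ₂ (u : kΔ)
          = ∑ u : kΔˣ, (χ₁ * χ₂) (u : kΔ) := by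
            exact Finset.sum_congr rfl (fun u _ => (MulChar.mul_apply _ _ _).symm)
        _ = ∑ a : kΔ, (χ₁ * χ₂) a := aux_units_sum _ h0
        _ = 0 := hsum0
    rw [this, mul_zero]
end

section
/- Let F be a field of characteristic zero, K/F a quadratic Galois extension with nontrivial automorphism σ acting entrywise on GL_n(K), and let S = { s ∈ GL_n(K) : σ(s) = s^{-1} }. If s_1, s_2 ∈ S are conjugate in GL_n(K), then they are conjugate by an element of GL_n(F). -/
open Polynomial Matrix

private lemma charpoly_eval' {K : Type*} [Field K] {n : ℕ}
    (M : Matrix (Fin n) (Fin n) K) (x : K) :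
    (M.charpoly).eval x = (x • (1 : Matrix (Fin n) (Fin n) K) - M).det := by
  rw [Matrix.charpoly, ← Polynomial.coe_evalRingHom, RingHom.map_det]
  congr 1
  ext i j
  by_cases hij : i = j <;>
    simp [hij, Matrix.charmatrix_apply_eq, Matrix.charmatrix_apply_ne,
      Matrix.one_apply, Matrix.smul_apply, Matrix.sub_apply]

/-- Let `F` be of characteristic zero, `K/F` quadratic Galois with nontrivial
automorphism `σ` acting entrywise on `GL_n(K)`, and
`S = { s : σ(s) = s⁻¹ }`.  If `s₁, s₂ ∈ S` are conjugate in `GL_n(K)`, they are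
conjugate by a `σ`-fixed element (an element of `GL_n(F)`). -/
theorem stmt_17 (F K : Type*) [Field F] [CharZero F] [Field K] [Algebra F K]
    [IsGalois F K] (hdim : Module.finrank F K = 2)
    (σ : K ≃ₐ[F] K) (hσ : σ ≠ 1)
    (n : ℕ) (s₁ s₂ : Matrix.GeneralLinearGroup (Fin n) K)
    (h₁ : Units.map (RingHom.mapMatrix (σ : K →+* K)).toMonoidHom s₁ = s₁⁻¹)
    (h₂ : Units.map (RingHom.mapMatrix (σ : K →+* K)).toMonoidHom s₂ = s₂⁻¹)
    (g : Matrix.GeneralLinearGroup (Fin n) K)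
    (hg : s₁ = g⁻¹ * s₂ * g) :
    ∃ h : Matrix.GeneralLinearGroup (Fin n) K,
      Units.map (RingHom.mapMatrix (σ : K →+* K)).toMonoidHom h = h ∧
      s₁ = h⁻¹ * s₂ * h := by
  classical
  -- finite dimensionality and σ² = 1
  have hfd : FiniteDimensional F K := by
    refine Module.finite_of_finrank_pos ?_
    rw [hdim]; norm_num
  have hcard : Fintype.card (K ≃ₐ[F] K) = 2 := by
    rw [← Nat.card_eq_fintype_card, IsGalois.card_aut_eq_finrank, hdim]
  have hσ2 : ∀ x : K, σ (σ x) = x := by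
    have h2 : σ * σ = 1 := by
      have : σ ^ Fintype.card (K ≃ₐ[F] K) = 1 := pow_card_eq_one
      rwa [hcard, pow_two] at this
    intro x
    have := congrArg (fun e : K ≃ₐ[F] K => e x) h2
    simpa using this
  -- choose α with σ α ≠ α
  obtain ⟨α, hα⟩ : ∃ a : K, σ a ≠ a := by
    by_contra hc
    push_neg at hc
    exact hσ (AlgEquiv.ext hc)
  have hαsub : α - σ α ≠ 0 := sub_ne_zero.mpr (fun h => hα h.symm)
  have hamap : Function.Injective (algebraMap F K) :=
    (algebraMap F K).injective
  -- the family λ t = 1 + t α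
  set lamf : F → K := fun t => 1 + algebraMap F K t * α with hlamf
  have hσlam : ∀ t : F, σ (lamf t) = 1 + algebraMap F K t * σ α := by
    intro t
    simp only [hlamf, map_add, _root_.map_one, _root_.map_mul, σ.commutes]
  have hlam_ne : ∀ t : F, lamf t ≠ 0 := by
    intro t h0
    have h0' : (1 : K) + algebraMap F K t * σ α = 0 := by
      rw [← hσlam t, h0, map_zero]
    have hsub : algebraMap F K t * (α - σ α) = 0 := by
      have h0'' : (1 : K) + algebraMap F K t * α = 0 := h0
      linear_combination h0'' - h0'
    rcases mul_eq_zero.mp hsub with h | h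
    · have ht : t = 0 := by
        have := (map_eq_zero_iff (algebraMap F K) hamap).mp h
        exact this
      rw [hlamf] at h0
      simp [ht] at h0
    · exact hαsub h
  have hσlam_ne : ∀ t : F, σ (lamf t) ≠ 0 := by
    intro t h0
    exact hlam_ne t (σ.injective (by simpa using h0))
  -- the map r t = λ t / σ (λ t) is injective
  set rf : F → K := fun t => lamf t / σ (lamf t) with hrf
  have hrinj : Function.Injective rf := by
    intro t s hts
    have hE : lamf t * σ (lamf s) = lamf s * σ (lamf t) :=
      (div_eq_div_iff (hσlam_ne t) (hσlam_ne s)).mp hts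
    rw [hσlam t, hσlam s] at hE
    simp only [hlamf] at hE
    have key : (algebraMap F K t - algebraMap F K s) * (α - σ α) = 0 := by
      linear_combination hE
    rcases mul_eq_zero.mp key with h | h
    · exact hamap (by linear_combination h)
    · exact absurd h hαsub
  -- matrices
  set τ : Matrix (Fin n) (Fin n) K →+* Matrix (Fin n) (Fin n) K :=
    RingHom.mapMatrix (σ : K →+* K) with hτ
  have hτsmul : ∀ (c : K) (A : Matrix (Fin n) (Fin n) K), τ (c • A) = σ c • τ A := by
    intro c A
    ext i j
    simp [hτ, Matrix.map_apply]
  have hττ : ∀ A : Matrix (Fin n) (Fin n) K, τ (τ A) = A := by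
    intro A
    ext i j
    simp [hτ, Matrix.map_apply, hσ2]
  set M : Matrix (Fin n) (Fin n) K := (↑g⁻¹ : Matrix (Fin n) (Fin n) K) * τ (↑g) with hM
  -- pick t with det (r t • 1 + M) ≠ 0
  have hq : ∃ t : F, ((rf t) • (1 : Matrix (Fin n) (Fin n) K) + M).det ≠ 0 := by
    have hmono : (Matrix.charpoly (-M)).Monic := Matrix.charpoly_monic _
    have hqne : Matrix.charpoly (-M) ≠ 0 := hmono.ne_zero
    have hfin : Set.Finite {x : K | (Matrix.charpoly (-M)).IsRoot x} :=
      Polynomial.finite_setOf_isRoot hqne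
    have hinf : (Set.range rf).Infinite := Set.infinite_range_of_injective hrinj
    obtain ⟨x, hx1, hx2⟩ := (hinf.diff hfin).nonempty
    obtain ⟨t, rfl⟩ := hx1
    refine ⟨t, ?_⟩
    have : (Matrix.charpoly (-M)).eval (rf t) ≠ 0 := hx2
    rwa [charpoly_eval', sub_neg_eq_add] at this
  obtain ⟨t, hdet⟩ := hq
  set lam : K := lamf t with hlamdef
  set slam : K := σ (lamf t) with hslamdef
  have hslam_ne : slam ≠ 0 := hσlam_ne t
  have hrt : rf t = lam / slam := rfl
  -- the candidate matrix
  set hmat : Matrix (Fin n) (Fin n) K := lam • (↑g : Matrix (Fin n) (Fin n) K) + slam • τ (↑g)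
    with hhmat
  -- factorization and invertibility
  have hgg : (↑g : Matrix (Fin n) (Fin n) K) * (↑g⁻¹ : Matrix (Fin n) (Fin n) K) = 1 := by
    have := congrArg Units.val (mul_inv_cancel g)
    rwa [Units.val_mul] at this
  have hfact : hmat = (↑g : Matrix (Fin n) (Fin n) K) *
      (slam • ((rf t) • (1 : Matrix (Fin n) (Fin n) K) + M)) := by
    rw [hhmat, hM, Matrix.mul_smul, Matrix.mul_add, Matrix.mul_smul, Matrix.mul_one,
      ← Matrix.mul_assoc, hgg, Matrix.one_mul, smul_add, smul_smul, hrt,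
      mul_div_cancel₀ _ hslam_ne]
  have hdetg : IsUnit (↑g : Matrix (Fin n) (Fin n) K).det :=
    (Matrix.isUnit_iff_isUnit_det _).mp g.isUnit
  have hunit : IsUnit hmat := by
    rw [Matrix.isUnit_iff_isUnit_det, hfact, Matrix.det_mul, Matrix.det_smul]
    exact hdetg.mul (IsUnit.mul (IsUnit.pow _ (Ne.isUnit hslam_ne)) (Ne.isUnit hdet))
  -- σ-fixedness
  have hfix : τ hmat = hmat := by
    rw [hhmat, map_add, hτsmul, hτsmul, hττ]
    have h1 : σ lam = slam := rfl
    have h2 : σ slam = lam := hσ2 _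
    rw [h1, h2, add_comm]
  -- intertwining, at the level of units
  have hgs' : g * s₁ = s₂ * g := by
    rw [hg]; group
  have hgs : (↑g : Matrix (Fin n) (Fin n) K) * (↑s₁ : Matrix (Fin n) (Fin n) K) =
      (↑s₂ : Matrix (Fin n) (Fin n) K) * (↑g : Matrix (Fin n) (Fin n) K) := by
    have := congrArg Units.val hgs'
    rwa [Units.val_mul, Units.val_mul] at this
  set Gg := Units.map (RingHom.mapMatrix (σ : K →+* K)).toMonoidHom g with hGg
  have hu2 : Gg * s₁⁻¹ = s₂⁻¹ * Gg := by
    have := congrArg (Units.map (RingHom.mapMatrix (σ : K →+* K)).toMonoidHom) hgs'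
    rwa [_root_.map_mul, _root_.map_mul, h₁, h₂] at this
  have hu3 : Gg * s₁ = s₂ * Gg := by
    have h3 : s₂ * (Gg * s₁⁻¹) * s₁ = s₂ * (s₂⁻¹ * Gg) * s₁ := by rw [hu2]
    simpa [mul_assoc] using h3.symm
  have hτg : (↑Gg : Matrix (Fin n) (Fin n) K) = τ (↑g) := by
    rw [hGg]; rfl
  have hτgs : τ (↑g) * (↑s₁ : Matrix (Fin n) (Fin n) K) =
      (↑s₂ : Matrix (Fin n) (Fin n) K) * τ (↑g) := by
    have := congrArg Units.val hu3
    rwa [Units.val_mul, Units.val_mul, hτg] at this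
  have hint : hmat * (↑s₁ : Matrix (Fin n) (Fin n) K) =
      (↑s₂ : Matrix (Fin n) (Fin n) K) * hmat := by
    rw [hhmat, Matrix.add_mul, Matrix.mul_add, Matrix.smul_mul, Matrix.smul_mul,
      Matrix.mul_smul, Matrix.mul_smul, hgs, hτgs]
  -- conclude
  refine ⟨hunit.unit, ?_, ?_⟩
  · apply Units.ext
    have : (↑(Units.map (RingHom.mapMatrix (σ : K →+* K)).toMonoidHom hunit.unit) :
        Matrix (Fin n) (Fin n) K) = τ (↑hunit.unit) := rfl
    rw [this, hunit.unit_spec, hfix]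
  · have hu : hunit.unit * s₁ = s₂ * hunit.unit := by
      apply Units.ext
      rw [Units.val_mul, Units.val_mul, hunit.unit_spec]
      exact hint
    calc s₁ = hunit.unit⁻¹ * (hunit.unit * s₁) := by group
      _ = hunit.unit⁻¹ * (s₂ * hunit.unit) := by rw [hu]
      _ = hunit.unit⁻¹ * s₂ * hunit.unit := by group
end

section
/- Let G be a group with an automorphism θ of order 2, H = G^θ its fixed-point subgroup, i(g) = θ(g)^{-1}, and S = { g ∈ G : θ(g) = g^{-1} }. Assume the map ψ : G → S, g ↦ g·i(g) is surjective, and that any two elements of S conjugate in G are conjugate by an element of H. Then the map ξ : H\G/H → Ad(H)\S sending the double coset HgH to the H-conjugacy class of g·i(g) is a well-defined bijection, and moreover HgH = H i(g) H for every g ∈ G (i.e., the anti-involution i fixes every (H,H)-double coset). -/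
/-- Let `G` be a group with an automorphism `θ` of order two, `H = G^θ`,
`i(g) = θ(g)⁻¹` and `S = { g : θ(g) = g⁻¹ }`.  Assume `ψ : g ↦ g·i(g)` is
surjective onto `S` and that elements of `S` conjugate in `G` are conjugate by
`H`.  Then the map `ξ : H\G/H → Ad(H)\S`, `HgH ↦ Ad(H)·(g·i(g))` is a
well-defined bijection (expressed elementwise: two elements lie in the same
double coset iff their images are `H`-conjugate, and every element of `S` is
`H`-conjugate to some `g·i(g)`), and moreover `H g H = H i(g) H` for all `g`. -/
theorem stmt_18 (G : Type*) [Group G] (θ : G →* G) (hinv : ∀ g : G, θ (θ g) = g)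
    (hψ : ∀ s : G, θ s = s⁻¹ → ∃ g : G, g * (θ g)⁻¹ = s)
    (hconj : ∀ s₁ s₂ : G, θ s₁ = s₁⁻¹ → θ s₂ = s₂⁻¹ →
      (∃ g : G, s₁ = g⁻¹ * s₂ * g) → ∃ h : G, θ h = h ∧ s₁ = h⁻¹ * s₂ * h) :
    (∀ g₁ g₂ : G,
      (∃ h₁ h₂ : G, θ h₁ = h₁ ∧ θ h₂ = h₂ ∧ g₂ = h₁ * g₁ * h₂) ↔
      (∃ h : G, θ h = h ∧ g₂ * (θ g₂)⁻¹ = h * (g₁ * (θ g₁)⁻¹) * h⁻¹)) ∧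
    (∀ s : G, θ s = s⁻¹ → ∃ g h : G, θ h = h ∧ s = h * (g * (θ g)⁻¹) * h⁻¹) ∧
    (∀ g : G, ∃ h₁ h₂ : G, θ h₁ = h₁ ∧ θ h₂ = h₂ ∧ (θ g)⁻¹ = h₁ * g * h₂) := by
  have key : ∀ g₁ g₂ : G,
      (∃ h₁ h₂ : G, θ h₁ = h₁ ∧ θ h₂ = h₂ ∧ g₂ = h₁ * g₁ * h₂) ↔
      (∃ h : G, θ h = h ∧ g₂ * (θ g₂)⁻¹ = h * (g₁ * (θ g₁)⁻¹) * h⁻¹) := by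
    intro g₁ g₂
    constructor
    · rintro ⟨h₁, h₂, f₁, f₂, rfl⟩
      refine ⟨h₁, f₁, ?_⟩
      simp only [map_mul, f₁, f₂, mul_inv_rev]
      group
    · rintro ⟨h, fh, he⟩
      have ha : (h * g₁) * (θ (h * g₁))⁻¹ = g₂ * (θ g₂)⁻¹ := by
        rw [he]; simp only [map_mul, fh, mul_inv_rev]; group
      have hk : θ (g₂⁻¹ * (h * g₁)) = g₂⁻¹ * (h * g₁) := by
        have h2 : (h * g₁) = g₂ * (θ g₂)⁻¹ * θ (h * g₁) := by rw [← ha]; group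
        rw [map_mul, map_inv]
        conv_rhs => rw [h2]
        group
      refine ⟨h, (g₂⁻¹ * (h * g₁))⁻¹, fh, by rw [map_inv, hk], by group⟩
  refine ⟨key, ?_, ?_⟩
  · intro s hs
    obtain ⟨g, hg⟩ := hψ s hs
    exact ⟨g, 1, map_one θ, by simp [hg]⟩
  · intro g
    rw [key]
    obtain ⟨h, fh, hh⟩ := hconj ((θ g)⁻¹ * g) (g * (θ g)⁻¹)
      (by simp only [map_mul, map_inv, hinv, mul_inv_rev, inv_inv])
      (by simp only [map_mul, map_inv, hinv, mul_inv_rev, inv_inv])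
      ⟨g, by group⟩
    refine ⟨h⁻¹, by rw [map_inv, fh], ?_⟩
    rw [map_inv, hinv, inv_inv]
    rw [hh]; group
end
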